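/- arXiv:1908.03045 — 2 statements merged into one kernel-verified Lean document; each statement's English description precedes it below -/
import Mathlib

section
/- Let k,n be positive integers, let 𝒱 ⊆ {0,1,…,k−1}^n ⊆ ℚ^n be a finite point set and let ≺ be the lexicographic term order on the monomials of ℚ[x_1,…,x_n] induced by the variable ordering x_{i_1} ≻ x_{i_2} ≻ ⋯ ≻ x_{i_n}. Then, identifying each monomial x^w = x_1^{w_1}⋯x_n^{w_n} with its exponent vector w ∈ ℕ^n, the set of standard monomials satisfies Sm(I(𝒱)) = D_{i_n, i_{n−1}, …, i_1}(𝒱). -/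
open MvPolynomial

/-- Monomials of `𝔽[x_1,…,x_n]` identified with their exponent vectors. -/
abbrev Mon (n : ℕ) := Fin n →₀ ℕ

/-- A linear order on monomials is a term order if `1` (i.e. the zero exponent
vector) is minimal and the order is compatible with multiplication by monomials. -/
def IsTermOrder {n : ℕ} (lin : LinearOrder (Mon n)) : Prop :=
  (∀ u : Mon n, lin.le 0 u) ∧
    ∀ u v w : Mon n, lin.le u v → lin.le (u + w) (v + w)

/-- The strict lexicographic comparison of exponent vectors induced by the variable
ordering `x_{σ 0} ≻ x_{σ 1} ≻ ⋯ ≻ x_{σ (n-1)}`. -/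
def lexLt {n : ℕ} (σ : Equiv.Perm (Fin n)) (u v : Mon n) : Prop :=
  ∃ j : Fin n, u (σ j) < v (σ j) ∧ ∀ i : Fin n, i < j → u (σ i) = v (σ i)

/-- `lin` is the lexicographic term order induced by the variable ordering
`x_{σ 0} ≻ x_{σ 1} ≻ ⋯ ≻ x_{σ (n-1)}`. -/
def IsLexOrder {n : ℕ} (σ : Equiv.Perm (Fin n)) (lin : LinearOrder (Mon n)) : Prop :=
  ∀ u v : Mon n, lin.lt u v ↔ lexLt σ u v

/-- `m` is the leading monomial of `f` with respect to the monomial order `lin`. -/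
def IsLeadMon {n : ℕ} {F : Type*} [CommSemiring F] (lin : LinearOrder (Mon n))
    (f : MvPolynomial (Fin n) F) (m : Mon n) : Prop :=
  m ∈ f.support ∧ ∀ m' ∈ f.support, lin.le m' m

/-- The set of standard monomials of an ideal `I` with respect to the monomial
order `lin`: monomials that are not the leading monomial of any nonzero `f ∈ I`. -/
def stdMon {n : ℕ} {F : Type*} [CommSemiring F] (lin : LinearOrder (Mon n))
    (I : Ideal (MvPolynomial (Fin n) F)) : Set (Mon n) :=
  { m | ¬ ∃ f ∈ I, f ≠ 0 ∧ IsLeadMon lin f m }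

/-- The vanishing ideal of a point set `V ⊆ F^n`. -/
def vanishIdeal {n : ℕ} {F : Type*} [CommRing F] (V : Set (Fin n → F)) :
    Ideal (MvPolynomial (Fin n) F) where
  carrier := { f | ∀ v ∈ V, MvPolynomial.eval v f = 0 }
  add_mem' := by
    intro a b ha hb v hv
    simp [map_add, ha v hv, hb v hv]
  zero_mem' := by intro v hv; simp
  smul_mem' := by
    intro c f hf v hv
    simp [smul_eq_mul, hf v hv]

/-- A finite point set (in `{0,…,k-1}^n`, over any field) is extremal if its vanishing
ideal has the same standard monomials for every lexicographic term order. -/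
def IsExtremal {n : ℕ} {F : Type*} [CommRing F] (V : Set (Fin n → F)) : Prop :=
  ∀ (σ₁ σ₂ : Equiv.Perm (Fin n)) (lin₁ lin₂ : LinearOrder (Mon n)),
    IsLexOrder σ₁ lin₁ → IsLexOrder σ₂ lin₂ →
      stdMon lin₁ (vanishIdeal V) = stdMon lin₂ (vanishIdeal V)

/-- Embedding of a point of `{0,…,k-1}^n` into `F^n`. -/
def toField {n k : ℕ} (F : Type*) [Field F] (w : Fin n → Fin k) : Fin n → F :=
  fun i => ((w i : ℕ) : F)

/-- Identification of a point of `{0,…,k-1}^n` with an exponent vector in `ℕ^n`. -/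
noncomputable def toExp {n k : ℕ} (w : Fin n → Fin k) : Mon n :=
  Finsupp.equivFunOnFinite.symm fun i => (w i : ℕ)

/-- The downshift `D_i(V)` of `V ⊆ {0,…,k-1}^n` at coordinate `i`: its `i`-section at
each choice of the other coordinates is `{0,1,…,m-1}` where `m` is the size of the
corresponding `i`-section of `V`. -/
def downshift {n k : ℕ} (V : Finset (Fin n → Fin k)) (i : Fin n) :
    Finset (Fin n → Fin k) :=
  Finset.univ.filter fun w =>
    (w i : ℕ) < (Finset.univ.filter fun α : Fin k => Function.update w i α ∈ V).card

/-- The iterated downshift `D_{σ(n-1)}(D_{σ(n-2)}(⋯(D_{σ 0}(V))))`,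
i.e. downshifts are applied at coordinates `σ 0, σ 1, …, σ (n-1)` in this order. -/
def iterDownshift {n k : ℕ} (σ : Equiv.Perm (Fin n)) (V : Finset (Fin n → Fin k)) :
    Finset (Fin n → Fin k) :=
  (List.ofFn fun j : Fin n => σ j).foldl downshift V

/-- A polynomial is degree dominated (with dominating term `x^w`) if it equals
`x^w + Σ αᵢ x^{vᵢ}` where each `x^{vᵢ}` divides `x^w`. -/
def IsDegDominated {n : ℕ} {F : Type*} [CommSemiring F]
    (f : MvPolynomial (Fin n) F) : Prop :=
  ∃ w : Mon n, MvPolynomial.coeff w f = 1 ∧ ∀ v ∈ f.support, v ≤ w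

/-- `G` is a Gröbner basis of `I` with respect to the monomial order `lin`:
`G ⊆ I` and for every nonzero `f ∈ I` some `g ∈ G` has leading monomial dividing
the leading monomial of `f` (divisibility of monomials being `≤` of exponents). -/
def IsGroebner {n : ℕ} {F : Type*} [CommSemiring F] (lin : LinearOrder (Mon n))
    (G : Finset (MvPolynomial (Fin n) F)) (I : Ideal (MvPolynomial (Fin n) F)) : Prop :=
  (∀ g ∈ G, g ∈ I) ∧
    ∀ f ∈ I, f ≠ 0 → ∀ m : Mon n, IsLeadMon lin f m →
      ∃ g ∈ G, ∃ mg : Mon n, IsLeadMon lin g mg ∧ mg ≤ m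

/-- `G` is a universal Gröbner basis of `I` if it is a Gröbner basis for every term order. -/
def IsUnivGroebner {n : ℕ} {F : Type*} [CommSemiring F]
    (G : Finset (MvPolynomial (Fin n) F)) (I : Ideal (MvPolynomial (Fin n) F)) : Prop :=
  ∀ lin : LinearOrder (Mon n), IsTermOrder lin → IsGroebner lin G I

/-- A term order is an elimination order with respect to `x_i` if `x_i` is greater
than every monomial not involving `x_i`. -/
def IsElimOrder {n : ℕ} (lin : LinearOrder (Mon n)) (i : Fin n) : Prop :=
  IsTermOrder lin ∧ ∀ m : Mon n, m i = 0 → lin.lt m (Finsupp.single i 1)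

/-- A set system `𝓕` shatters `S` if every subset of `S` is the intersection of `S`
with a member of `𝓕`. -/
def Shatters {n : ℕ} (𝓕 : Finset (Finset (Fin n))) (S : Finset (Fin n)) : Prop :=
  ∀ T ⊆ S, ∃ Fm ∈ 𝓕, Fm ∩ S = T

open scoped Classical in
/-- The family `Sh(𝓕)` of sets shattered by `𝓕`. -/
noncomputable def shatteredFamily {n : ℕ} (𝓕 : Finset (Finset (Fin n))) :
    Finset (Finset (Fin n)) :=
  Finset.univ.filter fun S => Shatters 𝓕 S

/-- A set system is shattering-extremal if it shatters exactly `|𝓕|` sets. -/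
def IsSExtremal {n : ℕ} (𝓕 : Finset (Finset (Fin n))) : Prop :=
  (shatteredFamily 𝓕).card = 𝓕.card

/-- The characteristic vector of a set, as a point of `F^n`. -/
def charVec {n : ℕ} (F : Type*) [Field F] (Fm : Finset (Fin n)) : Fin n → F :=
  fun i => if i ∈ Fm then 1 else 0

/-- The squarefree monomial `∏_{i ∈ S} x_i` associated to a set `S ⊆ [n]`,
as an exponent vector. -/
noncomputable def setMon {n : ℕ} (S : Finset (Fin n)) : Mon n :=
  Finsupp.equivFunOnFinite.symm fun i => if i ∈ S then 1 else 0

/-- The polynomial `f_{S,H} = (∏_{i∈H} x_i) ⬝ ∏_{i∈S∖H} (x_i - 1)`. -/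
noncomputable def fSH {n : ℕ} (F : Type*) [Field F] (S H : Finset (Fin n)) :
    MvPolynomial (Fin n) F :=
  (∏ i ∈ H, X i) * ∏ i ∈ S \ H, (X i - 1)

/-- The downshift `D_i(𝓕)` of a set system. -/
def dshiftSet {n : ℕ} (𝓕 : Finset (Finset (Fin n))) (i : Fin n) :
    Finset (Finset (Fin n)) :=
  𝓕.image (fun Fm => Fm.erase i) ∪ 𝓕.filter fun Fm => i ∈ Fm ∧ Fm.erase i ∈ 𝓕

/-- The iterated downshift `D_{σ(n-1)}(⋯(D_{σ 0}(𝓕)))` of a set system: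
downshifts are applied at `σ 0, σ 1, …, σ (n-1)` in this order. -/
def iterDshiftSet {n : ℕ} (σ : Equiv.Perm (Fin n)) (𝓕 : Finset (Finset (Fin n))) :
    Finset (Finset (Fin n)) :=
  (List.ofFn fun j : Fin n => σ j).foldl dshiftSet 𝓕

/-- Restriction of an exponent vector in `ℕ^{n+1}` to its first `n` coordinates. -/
noncomputable def restrictMon {n : ℕ} (w : Mon (n + 1)) : Mon n :=
  Finsupp.equivFunOnFinite.symm fun i => w i.castSucc


/-! ### Auxiliary development for Statement 0 -/

section AuxLex
variable {n k : ℕ}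

lemma toExp_apply (w : Fin n → Fin k) (i : Fin n) : toExp w i = (w i : ℕ) := rfl

lemma toExp_injective : Function.Injective (toExp (n := n) (k := k)) := by
  intro a b h
  funext i
  have := congrArg (fun m : Mon n => m i) h
  simpa [toExp_apply, Fin.val_injective.eq_iff] using this

/-- Lexicographic comparison of exponent vectors along a list of coordinates. -/
def llex : List (Fin n) → Mon n → Mon n → Prop
  | [], _, _ => False
  | i :: L, u, v => u i < v i ∨ (u i = v i ∧ llex L u v)

@[simp] lemma llex_nil {u v : Mon n} : llex ([] : List (Fin n)) u v ↔ False := Iff.rfl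

@[simp] lemma llex_cons {i : Fin n} {L : List (Fin n)} {u v : Mon n} :
    llex (i :: L) u v ↔ u i < v i ∨ (u i = v i ∧ llex L u v) := Iff.rfl

lemma llex_congr {L : List (Fin n)} {u v u' v' : Mon n}
    (h : ∀ j ∈ L, u j = u' j ∧ v j = v' j) : llex L u v ↔ llex L u' v' := by
  induction L with
  | nil => rfl
  | cons i L ih =>
    have hi := h i (by simp)
    simp only [llex_cons, hi.1, hi.2, ih (fun j hj => h j (by simp [hj]))]

lemma llex_iff {L : List (Fin n)} {u v : Mon n} :
    llex L u v ↔ ∃ t : ℕ, ∃ ht : t < L.length, u (L.get ⟨t, ht⟩) < v (L.get ⟨t, ht⟩) ∧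
      ∀ s : ℕ, ∀ hs : s < L.length, s < t → u (L.get ⟨s, hs⟩) = v (L.get ⟨s, hs⟩) := by
  induction L with
  | nil => simp
  | cons i L ih =>
    simp only [llex_cons, ih]
    constructor
    · rintro (h | ⟨he, t, ht, h1, h2⟩)
      · exact ⟨0, by simp, h, fun s hs hs0 => absurd hs0 (Nat.not_lt_zero s)⟩
      · refine ⟨t + 1, by simpa using Nat.succ_lt_succ ht, h1, ?_⟩
        intro s hs hst
        cases s with
        | zero => exact he
        | succ s =>
          exact h2 s (by simpa using Nat.lt_of_succ_lt_succ hs) (Nat.lt_of_succ_lt_succ hst)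
    · rintro ⟨t, ht, h1, h2⟩
      cases t with
      | zero => exact Or.inl h1
      | succ t =>
        refine Or.inr ⟨h2 0 (by simp) (Nat.succ_pos t), ?_⟩
        exact ⟨t, Nat.lt_of_succ_lt_succ ht, h1,
          fun s hs hst => h2 (s + 1) (by simpa using Nat.succ_lt_succ hs)
            (Nat.succ_lt_succ hst)⟩

lemma lexLt_iff_llex (σ : Equiv.Perm (Fin n)) (u v : Mon n) :
    lexLt σ u v ↔ llex (List.ofFn fun j : Fin n => σ j) u v := by
  rw [llex_iff]
  constructor
  · rintro ⟨j, h1, h2⟩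
    refine ⟨j.val, by simp [j.isLt], by simpa using h1, ?_⟩
    intro s hs hst
    have hs' : s < n := by simpa using hs
    simpa using h2 ⟨s, hs'⟩ (by simpa [Fin.lt_def] using hst)
  · rintro ⟨t, ht, h1, h2⟩
    have ht' : t < n := by simpa using ht
    refine ⟨⟨t, ht'⟩, by simpa using h1, ?_⟩
    intro i hi
    have := h2 i.val (by simp [i.isLt]) (by simpa [Fin.lt_def] using hi)
    simpa using this

end AuxLex

section AuxDownshift
variable {n k : ℕ}

/-- Size of the `i`-section of `V` through `w`. -/
def secCard (V : Finset (Fin n → Fin k)) (i : Fin n) (w : Fin n → Fin k) : ℕ :=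
  (Finset.univ.filter fun α : Fin k => Function.update w i α ∈ V).card

lemma mem_downshift {V : Finset (Fin n → Fin k)} {i : Fin n} {w : Fin n → Fin k} :
    w ∈ downshift V i ↔ (w i : ℕ) < secCard V i w := by
  simp [downshift, secCard]

lemma secCard_le (V : Finset (Fin n → Fin k)) (i : Fin n) (w : Fin n → Fin k) :
    secCard V i w ≤ k := by
  simpa [secCard] using (Finset.card_filter_le Finset.univ
    (fun α : Fin k => Function.update w i α ∈ V)).trans (by simp)

lemma secCard_eq_of_update_eq {V : Finset (Fin n → Fin k)} {i : Fin n}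
    {w w' : Fin n → Fin k} {z : Fin k}
    (h : Function.update w i z = Function.update w' i z) :
    secCard V i w = secCard V i w' := by
  unfold secCard
  congr 1
  ext α
  have : Function.update w i α = Function.update w' i α := by
    rw [← Function.update_idem (a := i) z α w, h, Function.update_idem]
  simp [this]

lemma card_filter_val_lt {m : ℕ} (hm : m ≤ k) :
    (Finset.univ.filter fun α : Fin k => (α : ℕ) < m).card = m := by
  rw [← Finset.card_image_of_injective _ Fin.val_injective]
  have : ((Finset.univ.filter fun α : Fin k => (α : ℕ) < m).image Fin.val)
      = Finset.range m := by
    ext a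
    simp only [Finset.mem_image, Finset.mem_filter, Finset.mem_univ, true_and,
      Finset.mem_range]
    constructor
    · rintro ⟨α, hα, rfl⟩; exact hα
    · intro ha; exact ⟨⟨a, lt_of_lt_of_le ha hm⟩, ha, rfl⟩
  rw [this, Finset.card_range]

lemma card_downshift (V : Finset (Fin n → Fin k)) (i : Fin n) :
    (downshift V i).card = V.card := by
  rcases Nat.eq_zero_or_pos k with hk | hk
  · subst hk
    have : IsEmpty (Fin n → Fin 0) := ⟨fun w => (w i).elim0⟩
    rw [Finset.eq_empty_of_isEmpty (downshift V i), Finset.eq_empty_of_isEmpty V]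
  · set z : Fin k := ⟨0, hk⟩ with hz
    set g : (Fin n → Fin k) → (Fin n → Fin k) := fun w => Function.update w i z with hg
    set B : Finset (Fin n → Fin k) := Finset.univ.filter (fun b => b i = z) with hB
    have hmapV : ∀ w ∈ V, g w ∈ B := fun w _ => by simp [hg, hB]
    have hmapD : ∀ w ∈ downshift V i, g w ∈ B := fun w _ => by simp [hg, hB]
    rw [Finset.card_eq_sum_card_fiberwise hmapV, Finset.card_eq_sum_card_fiberwise hmapD]
    refine Finset.sum_congr rfl fun b hb => ?_
    have hbz : b i = z := by simpa [hB] using hb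
    have hbself : Function.update b i z = b := by
      rw [← hbz]; exact Function.update_eq_self i b
    have hVfib : (V.filter fun w => g w = b).card = secCard V i b := by
      unfold secCard
      refine Finset.card_bij' (fun w _ => w i) (fun α _ => Function.update b i α)
        ?_ ?_ ?_ ?_
      · intro w hw
        simp only [Finset.mem_filter, Finset.mem_univ, true_and, hg] at hw ⊢
        obtain ⟨hwV, hwb⟩ := hw
        have : Function.update b i (w i) = w := by
          rw [← hwb, Function.update_idem, Function.update_eq_self]
        rwa [this]
      · intro α hα
        simp only [Finset.mem_filter, Finset.mem_univ, true_and, hg] at hα ⊢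
        refine ⟨hα, ?_⟩
        rw [Function.update_idem, hbself]
      · intro w hw
        simp only [Finset.mem_filter, hg] at hw
        rw [← hw.2, Function.update_idem, Function.update_eq_self]
      · intro α hα
        simp
    have hDfib : ((downshift V i).filter fun w => g w = b).card = secCard V i b := by
      have hsec : ∀ w : Fin n → Fin k, g w = b → secCard V i w = secCard V i b := by
        intro w hw
        refine secCard_eq_of_update_eq (z := z) ?_
        rw [hbself]
        exact hw
      have hset : ((downshift V i).filter fun w => g w = b)
          = (Finset.univ.filter fun α : Fin k => (α : ℕ) < secCard V i b).image
              (fun α => Function.update b i α) := by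
        ext w
        simp only [Finset.mem_filter, Finset.mem_image, Finset.mem_univ, true_and,
          mem_downshift]
        constructor
        · rintro ⟨hw1, hw2⟩
          refine ⟨w i, by rw [← hsec w hw2]; exact hw1, ?_⟩
          rw [← hw2]
          simp only [hg, Function.update_idem, Function.update_eq_self]
        · rintro ⟨α, hα, rfl⟩
          have hgw : g (Function.update b i α) = b := by
            simp only [hg, Function.update_idem, hbself]
          refine ⟨?_, hgw⟩
          rw [hsec _ hgw]
          simpa using hα
      rw [hset, Finset.card_image_of_injective, card_filter_val_lt (secCard_le V i b)]
      intro a a' haa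
      have := congrFun haa i
      simpa using this
    rw [hVfib, hDfib]

lemma card_foldl_downshift :
    ∀ (L : List (Fin n)) (V : Finset (Fin n → Fin k)),
      (L.foldl downshift V).card = V.card := by
  intro L
  induction L with
  | nil => intro V; rfl
  | cons i L ih => intro V; rw [List.foldl_cons, ih, card_downshift]

/-- The `i`-slice of `V` at level `d`, recentred at level `z`. -/
def sliceAt (V : Finset (Fin n → Fin k)) (i : Fin n) (d z : Fin k) :
    Finset (Fin n → Fin k) :=
  (V.filter fun w => w i = d).image fun w => Function.update w i z

lemma mem_sliceAt {V : Finset (Fin n → Fin k)} {i : Fin n} {d z : Fin k}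
    {b : Fin n → Fin k} :
    b ∈ sliceAt V i d z ↔ b i = z ∧ Function.update b i d ∈ V := by
  simp only [sliceAt, Finset.mem_image, Finset.mem_filter]
  constructor
  · rintro ⟨w, ⟨hwV, hwd⟩, rfl⟩
    refine ⟨by simp, ?_⟩
    rw [Function.update_idem, ← hwd, Function.update_eq_self]
    exact hwV
  · rintro ⟨hbz, hbV⟩
    exact ⟨Function.update b i d, ⟨hbV, by simp⟩,
      by rw [Function.update_idem, ← hbz, Function.update_eq_self]⟩

lemma sliceAt_downshift {i j : Fin n} (hij : j ≠ i) (W : Finset (Fin n → Fin k))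
    (d z : Fin k) :
    sliceAt (downshift W j) i d z = downshift (sliceAt W i d z) j := by
  ext b
  rw [mem_sliceAt, mem_downshift, mem_downshift]
  by_cases hbz : b i = z
  · have hsec : secCard (sliceAt W i d z) j b = secCard W j (Function.update b i d) := by
      unfold secCard
      congr 1
      ext α
      simp only [Finset.mem_filter, Finset.mem_univ, true_and, mem_sliceAt]
      rw [Function.update_comm hij, Function.update_of_ne hij.symm, hbz]
      simp
    rw [hsec, Function.update_of_ne hij]
    simp [hbz]
  · have hsec : secCard (sliceAt W i d z) j b = 0 := by
      unfold secCard
      rw [Finset.card_eq_zero, Finset.eq_empty_iff_forall_notMem]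
      intro α hα
      simp only [Finset.mem_filter, Finset.mem_univ, true_and, mem_sliceAt] at hα
      rw [Function.update_of_ne hij.symm] at hα
      exact hbz hα.1
    rw [hsec]
    simp [hbz]

lemma foldl_sliceAt {i : Fin n} {d z : Fin k} :
    ∀ (L : List (Fin n)), i ∉ L → ∀ W : Finset (Fin n → Fin k),
      sliceAt (L.foldl downshift W) i d z = L.foldl downshift (sliceAt W i d z) := by
  intro L
  induction L with
  | nil => intro _ W; rfl
  | cons j L ih =>
    intro hiL W
    have hji : j ≠ i := fun h => hiL (h ▸ List.mem_cons_self)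
    have hiL' : i ∉ L := fun h => hiL (List.mem_cons_of_mem j h)
    simp only [List.foldl_cons]
    rw [ih hiL', sliceAt_downshift hji]

end AuxDownshift

section AuxSlice
variable {n k : ℕ}

lemma erase_add_single {i : Fin n} {m' : Mon n} (h : m' i = 0) (d : ℕ) :
    (m' + Finsupp.single i d).erase i = m' := by
  ext j
  by_cases hj : j = i
  · subst hj; simp [Finsupp.erase_same, h]
  · simp [Finsupp.erase_ne hj, Finsupp.single_apply, Ne.symm hj]

/-- The coefficient of `x_i^d` in `f`, as a polynomial in the other variables. -/
noncomputable def sliceCoeff (i : Fin n) (d : ℕ) (f : MvPolynomial (Fin n) ℚ) :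
    MvPolynomial (Fin n) ℚ :=
  ∑ m ∈ f.support.filter (fun m => m i = d), monomial (m.erase i) (coeff m f)

lemma coeff_sliceCoeff (i : Fin n) (d : ℕ) (f : MvPolynomial (Fin n) ℚ) (m' : Mon n) :
    coeff m' (sliceCoeff i d f) =
      if m' i = 0 then coeff (m' + Finsupp.single i d) f else 0 := by
  unfold sliceCoeff
  rw [MvPolynomial.coeff_sum]
  by_cases h : m' i = 0
  · rw [if_pos h]
    have key : ∀ m ∈ f.support.filter (fun m => m i = d),
        coeff m' (monomial (m.erase i) (coeff m f)) =
          if m = m' + Finsupp.single i d then coeff m f else 0 := by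
      intro m hm
      rw [MvPolynomial.coeff_monomial]
      simp only [Finset.mem_filter] at hm
      refine if_congr ⟨?_, ?_⟩ rfl rfl
      · rintro rfl
        conv_lhs => rw [← Finsupp.single_add_erase i m]
        rw [hm.2, add_comm]
      · rintro rfl
        exact erase_add_single h d
    rw [Finset.sum_congr rfl key,
      Finset.sum_ite_eq' (Finset.filter _ f.support) (m' + Finsupp.single i d)
        (fun m => coeff m f)]
    by_cases hb : (m' + Finsupp.single i d) ∈ f.support
    · rw [if_pos]
      simp [Finset.mem_filter, hb, h]
    · rw [if_neg, MvPolynomial.notMem_support_iff.mp hb]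
      simp [Finset.mem_filter, hb]
  · rw [if_neg h]
    refine Finset.sum_eq_zero fun m hm => ?_
    rw [MvPolynomial.coeff_monomial, if_neg]
    intro he
    apply h
    rw [← he, Finsupp.erase_same]

lemma support_sliceCoeff {i : Fin n} {d : ℕ} {f : MvPolynomial (Fin n) ℚ} {m' : Mon n}
    (h : m' ∈ (sliceCoeff i d f).support) :
    m' i = 0 ∧ m' + Finsupp.single i d ∈ f.support := by
  rw [mem_support_iff, coeff_sliceCoeff] at h
  by_cases h0 : m' i = 0
  · rw [if_pos h0] at h
    exact ⟨h0, mem_support_iff.mpr h⟩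
  · rw [if_neg h0] at h
    exact absurd rfl h

lemma eval_sliceCoeff (i : Fin n) (d : ℕ) (f : MvPolynomial (Fin n) ℚ) (b : Fin n → ℚ) :
    eval b (sliceCoeff i d f) =
      ∑ m ∈ f.support.filter (fun m => m i = d),
        coeff m f * ∏ j ∈ Finset.univ.erase i, b j ^ m j := by
  unfold sliceCoeff
  rw [map_sum]
  refine Finset.sum_congr rfl fun m hm => ?_
  rw [eval_monomial]
  congr 1
  rw [Finsupp.prod_fintype _ _ (fun j => pow_zero (b j)),
    ← Finset.mul_prod_erase Finset.univ (fun j => b j ^ (Finsupp.erase i m) j)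
      (Finset.mem_univ i)]
  rw [Finsupp.erase_same, pow_zero, one_mul]
  exact Finset.prod_congr rfl fun j hj => by
    rw [Finsupp.erase_ne (Finset.ne_of_mem_erase hj)]

lemma eval_sliceCoeff_eq_zero {V : Finset (Fin n → Fin k)} {f : MvPolynomial (Fin n) ℚ}
    (hvanish : ∀ v ∈ V, eval (toField ℚ v) f = 0) {i : Fin n} {dn : ℕ}
    (hdeg : ∀ m ∈ f.support, m i ≤ dn)
    {w : Fin n → Fin k} (hw : dn < secCard V i w)
    {p : Fin n → ℚ} (hp : ∀ j : Fin n, j ≠ i → p j = toField ℚ w j) :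
    eval p (sliceCoeff i dn f) = 0 := by
  classical
  set T : Finset (Fin k) := Finset.univ.filter fun α : Fin k => Function.update w i α ∈ V
    with hT
  set q : Polynomial ℚ := ∑ m ∈ f.support,
    Polynomial.C (coeff m f * ∏ j ∈ Finset.univ.erase i, p j ^ m j) *
      Polynomial.X ^ (m i) with hq
  have heval : ∀ α ∈ T, q.eval ((α : ℕ) : ℚ) = 0 := by
    intro α hα
    have hαV : Function.update w i α ∈ V := by
      simpa [hT] using hα
    have := hvanish _ hαV
    rw [eval_eq' (toField ℚ (Function.update w i α)) f] at this
    rw [hq, Polynomial.eval_finset_sum]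
    rw [← this]
    refine Finset.sum_congr rfl fun m hm => ?_
    simp only [Polynomial.eval_mul, Polynomial.eval_C, Polynomial.eval_pow,
      Polynomial.eval_X]
    rw [← Finset.mul_prod_erase Finset.univ
      (fun j => toField ℚ (Function.update w i α) j ^ m j) (Finset.mem_univ i)]
    have h1 : toField ℚ (Function.update w i α) i = ((α : ℕ) : ℚ) := by
      simp [toField]
    have h2 : ∀ j ∈ Finset.univ.erase i,
        toField ℚ (Function.update w i α) j ^ m j = p j ^ m j := by
      intro j hj
      have hji : j ≠ i := Finset.ne_of_mem_erase hj
      rw [show toField ℚ (Function.update w i α) j = p j from ?_]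
      rw [hp j hji, toField, toField]
      simp [Function.update_of_ne hji]
    rw [h1, Finset.prod_congr rfl h2]
    ring
  have hdegq : q.natDegree ≤ dn := by
    rw [hq]
    refine Polynomial.natDegree_sum_le_of_forall_le _ _ fun m hm => ?_
    refine (Polynomial.natDegree_C_mul_le _ _).trans ?_
    simpa [Polynomial.natDegree_X_pow] using hdeg m hm
  have hqz : q = 0 := by
    refine Polynomial.eq_zero_of_natDegree_lt_card_of_eval_eq_zero' q
      (T.image fun α : Fin k => ((α : ℕ) : ℚ)) ?_ ?_
    · intro a ha
      obtain ⟨α, hα, rfl⟩ := Finset.mem_image.mp ha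
      exact heval α hα
    · rw [Finset.card_image_of_injective]
      · calc q.natDegree ≤ dn := hdegq
          _ < T.card := hw
      · intro a b hab
        exact Fin.val_injective (Nat.cast_injective hab)
  have hcoeff : q.coeff dn = 0 := by rw [hqz]; simp
  rw [eval_sliceCoeff]
  rw [← hcoeff, hq, Polynomial.finset_sum_coeff]
  rw [Finset.sum_filter]
  refine Finset.sum_congr rfl fun m hm => ?_
  rw [Polynomial.coeff_C_mul, Polynomial.coeff_X_pow]
  by_cases h : m i = dn
  · rw [if_pos h, if_pos h.symm, mul_one]
  · rw [if_neg h, if_neg (Ne.symm h), mul_zero]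

end AuxSlice

section AuxKey
variable {n k : ℕ}

lemma llex_key (hk : 0 < k) :
    ∀ L : List (Fin n), L.Nodup →
    ∀ (V : Finset (Fin n → Fin k)) (f : MvPolynomial (Fin n) ℚ),
      (∀ v ∈ V, eval (toField ℚ v) f = 0) →
      (∀ m ∈ f.support, ∀ j : Fin n, j ∉ L → m j = 0) →
      ∀ u : Fin n → Fin k, u ∈ L.foldl downshift V →
      (∀ m ∈ f.support, m = toExp u ∨ llex L m (toExp u)) →
      coeff (toExp u) f = 0 := by
  intro L
  induction L with
  | nil =>
    intro _ V f hvan hvars u hu hlex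
    by_cases hmem : toExp u ∈ f.support
    · have hvu := hvan u hu
      rw [eval_eq' (toField ℚ u) f] at hvu
      have hsupp : f.support = {toExp u} := by
        refine Finset.eq_singleton_iff_unique_mem.mpr ⟨hmem, fun m hm => ?_⟩
        rcases hlex m hm with h | h
        · exact h
        · exact h.elim
      rw [hsupp, Finset.sum_singleton] at hvu
      have hone : ∏ j, toField ℚ u j ^ (toExp u) j = 1 :=
        Finset.prod_eq_one fun j _ => by
          rw [hvars _ hmem j List.not_mem_nil, pow_zero]
      rwa [hone, mul_one] at hvu
    · exact MvPolynomial.notMem_support_iff.mp hmem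
  | cons i L ih =>
    intro hnd V f hvan hvars u hu hlex
    obtain ⟨hiL, hndL⟩ := List.nodup_cons.mp hnd
    rw [List.foldl_cons] at hu
    have huEi : toExp u i = (u i : ℕ) := rfl
    have hu'mem : Function.update u i ⟨0, hk⟩ ∈
        L.foldl downshift (sliceAt (downshift V i) i (u i) ⟨0, hk⟩) := by
      rw [← foldl_sliceAt L hiL (downshift V i), mem_sliceAt]
      refine ⟨by simp, ?_⟩
      rw [Function.update_idem, Function.update_eq_self]
      exact hu
    have hdeg : ∀ m ∈ f.support, m i ≤ (u i : ℕ) := by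
      intro m hm
      rcases hlex m hm with h | h
      · rw [h, huEi]
      · rcases llex_cons.mp h with h1 | ⟨h1, _⟩
        · rw [huEi] at h1; exact le_of_lt h1
        · rw [huEi] at h1; exact le_of_eq h1
    have htoExpu' : toExp (Function.update u i ⟨0, hk⟩) = (toExp u).erase i := by
      ext j
      by_cases hj : j = i
      · subst hj
        rw [Finsupp.erase_same, toExp_apply, Function.update_self]
      · rw [Finsupp.erase_ne hj, toExp_apply, toExp_apply, Function.update_of_ne hj]
    have hmain : coeff (toExp (Function.update u i ⟨0, hk⟩))
        (sliceCoeff i (u i : ℕ) f) = 0 := by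
      refine ih hndL _ _ ?_ ?_ _ hu'mem ?_
      · intro b hb
        rw [mem_sliceAt] at hb
        obtain ⟨hbz, hbW⟩ := hb
        rw [mem_downshift, Function.update_self] at hbW
        refine eval_sliceCoeff_eq_zero hvan hdeg (w := Function.update b i (u i)) hbW ?_
        intro j hj
        unfold toField
        rw [Function.update_of_ne hj]
      · intro m' hm' j hj
        obtain ⟨h0, hmem⟩ := support_sliceCoeff hm'
        by_cases hji : j = i
        · subst hji; exact h0
        · have hjL : j ∉ i :: L := by
            simp only [List.mem_cons, not_or]
            exact ⟨hji, hj⟩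
          have := hvars _ hmem j hjL
          rwa [Finsupp.add_apply, Finsupp.single_apply, if_neg (fun h => hji h.symm),
            add_zero] at this
      · intro m' hm'
        obtain ⟨h0, hmem⟩ := support_sliceCoeff hm'
        rcases hlex _ hmem with h | h
        · left
          rw [htoExpu', ← h, erase_add_single h0]
        · rcases llex_cons.mp h with h1 | ⟨h1, h2⟩
          · exfalso
            rw [huEi] at h1
            have hdn : (m' + Finsupp.single i (u i : ℕ)) i = (u i : ℕ) := by
              rw [Finsupp.add_apply, h0, Finsupp.single_eq_same, zero_add]
            rw [hdn] at h1
            exact lt_irrefl _ h1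
          · right
            refine (llex_congr fun j hj => ?_).mp h2
            have hji : j ≠ i := fun h => hiL (h ▸ hj)
            constructor
            · rw [Finsupp.add_apply, Finsupp.single_apply, if_neg (fun h => hji h.symm),
                add_zero]
            · rw [htoExpu', Finsupp.erase_ne hji]
    have hcoe := coeff_sliceCoeff i (u i : ℕ) f (toExp (Function.update u i ⟨0, hk⟩))
    rw [if_pos (by rw [htoExpu']; exact Finsupp.erase_same)] at hcoe
    have huEeq : toExp (Function.update u i ⟨0, hk⟩) + Finsupp.single i (u i : ℕ)
        = toExp u := by
      rw [htoExpu', add_comm, ← huEi, Finsupp.single_add_erase]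
    rw [← huEeq, ← hcoe]
    exact hmain

end AuxKey

section AuxCard
variable {n k : ℕ}

lemma mem_vanishIdeal {F : Type*} [CommRing F] {S : Set (Fin n → F)}
    {f : MvPolynomial (Fin n) F} :
    f ∈ vanishIdeal S ↔ ∀ v ∈ S, MvPolynomial.eval v f = 0 := Iff.rfl

lemma card_le_of_subset_stdMon (V : Finset (Fin n → Fin k)) (lin : LinearOrder (Mon n))
    (S : Finset (Mon n))
    (hS : ∀ m ∈ S, m ∈ stdMon lin (vanishIdeal
      ((V.image (toField ℚ) : Finset (Fin n → ℚ)) : Set (Fin n → ℚ)))) :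
    S.card ≤ V.card := by
  classical
  by_contra hlt
  push_neg at hlt
  set P : Finset (Fin n → ℚ) := V.image (toField ℚ) with hP
  have hPcard : P.card ≤ V.card := Finset.card_image_le
  set vv : Mon n → (↥P → ℚ) := fun m p => ∏ j, (p : Fin n → ℚ) j ^ m j with hvv
  have hnli : ¬ LinearIndependent ℚ (fun s : ↥S => vv ↑s) := by
    intro hli
    have h1 := hli.fintype_card_le_finrank
    rw [Module.finrank_pi, Fintype.card_coe, Fintype.card_coe] at h1
    omega
  obtain ⟨c, hsum, s0, hs0⟩ := Fintype.not_linearIndependent_iff.mp hnli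
  set f : MvPolynomial (Fin n) ℚ := ∑ s : ↥S, monomial (↑s : Mon n) (c s) with hf
  have hcoeff : ∀ s : ↥S, coeff (↑s : Mon n) f = c s := by
    intro s
    rw [hf, MvPolynomial.coeff_sum]
    have key : ∀ s' : ↥S, s' ∈ (Finset.univ : Finset ↥S) →
        coeff (↑s : Mon n) (monomial (↑s' : Mon n) (c s')) =
          if s' = s then c s' else 0 := by
      intro s' _
      rw [MvPolynomial.coeff_monomial]
      exact if_congr ⟨fun h => Subtype.ext h, fun h => congrArg _ h⟩ rfl rfl
    rw [Finset.sum_congr rfl key, Finset.sum_ite_eq' Finset.univ s (fun s' => c s'),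
      if_pos (Finset.mem_univ s)]
  have hf0 : f ≠ 0 := fun h => hs0 (by rw [← hcoeff s0, h, MvPolynomial.coeff_zero])
  have hfI : f ∈ vanishIdeal ((P : Finset (Fin n → ℚ)) : Set (Fin n → ℚ)) := by
    rw [mem_vanishIdeal]
    intro p hp
    have hfun := congrFun hsum ⟨p, hp⟩
    simp only [Finset.sum_apply, Pi.smul_apply, Pi.zero_apply, smul_eq_mul, hvv] at hfun
    rw [hf, map_sum]
    rw [← hfun]
    refine Finset.sum_congr rfl fun s _ => ?_
    rw [eval_monomial, Finsupp.prod_fintype _ _ (fun j => pow_zero (p j))]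
  have hsupp : f.support ⊆ S := by
    intro m hm
    by_contra hmS
    rw [MvPolynomial.mem_support_iff] at hm
    apply hm
    rw [hf, MvPolynomial.coeff_sum]
    refine Finset.sum_eq_zero fun s _ => ?_
    rw [MvPolynomial.coeff_monomial, if_neg]
    intro h
    exact hmS (h ▸ (s : ↥S).2)
  have hne : f.support.Nonempty := by
    rw [Finset.nonempty_iff_ne_empty]
    intro h
    exact hf0 (MvPolynomial.support_eq_empty.mp h)
  obtain ⟨m0, hm0, hmax⟩ := @Finset.exists_max_image (Mon n) (Mon n) lin f.support id hne
  exact (hS m0 (hsupp hm0)) ⟨f, hfI, hf0, hm0, fun m' hm' => hmax m' hm'⟩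

lemma stdMon_finite (V : Finset (Fin n → Fin k)) (lin : LinearOrder (Mon n)) :
    (stdMon lin (vanishIdeal
      ((V.image (toField ℚ) : Finset (Fin n → ℚ)) : Set (Fin n → ℚ)))).Finite := by
  by_contra hinf
  obtain ⟨T, hT, hcard⟩ := Set.Infinite.exists_subset_card_eq hinf (V.card + 1)
  have := card_le_of_subset_stdMon V lin T (fun m hm => hT hm)
  omega

end AuxCard

/-- Theorem `Smdownshiftgen`.
For positive `k, n`, a finite point set `𝒱 ⊆ {0,…,k-1}^n ⊆ ℚ^n` and the lex order `≺`
induced by `x_{σ 0} ≻ x_{σ 1} ≻ ⋯ ≻ x_{σ(n-1)}`, the standard monomials of `I(𝒱)`,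
viewed as exponent vectors, are exactly `D_{σ(n-1),…,σ 0}(𝒱)`. -/
theorem standard_monomials_eq_iterated_downshift {n k : ℕ} (hn : 0 < n) (hk : 0 < k)
    (V : Finset (Fin n → Fin k)) (σ : Equiv.Perm (Fin n))
    (lin : LinearOrder (Mon n)) (hlin : IsLexOrder σ lin) :
    stdMon lin (vanishIdeal ((V.image (toField ℚ) : Finset (Fin n → ℚ)) :
        Set (Fin n → ℚ)))
      = (((iterDownshift σ V).image toExp : Finset (Mon n)) : Set (Mon n)) := by
  classical
  have hfin := stdMon_finite V lin
  have hDsub : ∀ m ∈ (iterDownshift σ V).image toExp,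
      m ∈ stdMon lin (vanishIdeal
        ((V.image (toField ℚ) : Finset (Fin n → ℚ)) : Set (Fin n → ℚ))) := by
    intro m hm
    obtain ⟨u, huD, rfl⟩ := Finset.mem_image.mp hm
    rintro ⟨f, hfI, hf0, hlm⟩
    have hvan : ∀ v ∈ V, eval (toField ℚ v) f = 0 := by
      intro v hv
      exact (mem_vanishIdeal.mp hfI) (toField ℚ v)
        (Finset.mem_coe.mpr (Finset.mem_image_of_mem _ hv))
    have hvars : ∀ m' ∈ f.support, ∀ j : Fin n,
        j ∉ (List.ofFn fun j : Fin n => σ j) → m' j = 0 := by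
      intro m' _ j hj
      exfalso
      apply hj
      rw [List.mem_ofFn]
      exact ⟨σ.symm j, σ.apply_symm_apply j⟩
    have hu : u ∈ (List.ofFn fun j : Fin n => σ j).foldl downshift V := huD
    have hlex : ∀ m' ∈ f.support,
        m' = toExp u ∨ llex (List.ofFn fun j : Fin n => σ j) m' (toExp u) := by
      intro m' hm'
      by_cases heq : m' = toExp u
      · exact Or.inl heq
      · right
        rw [← lexLt_iff_llex, ← hlin m' (toExp u)]
        have hle := hlm.2 m' hm'
        exact (@lt_iff_le_not_ge (Mon n) lin.toPreorder m' (toExp u)).mpr ⟨hle,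
          fun hge => heq (@le_antisymm (Mon n) lin.toPartialOrder m' (toExp u) hle hge)⟩
    have hzero := llex_key hk (List.ofFn fun j : Fin n => σ j)
      (List.nodup_ofFn.mpr (σ.injective)) V f hvan hvars u hu hlex
    exact MvPolynomial.mem_support_iff.mp hlm.1 hzero
  have hDcard : ((iterDownshift σ V).image toExp).card = V.card := by
    rw [Finset.card_image_of_injective _ toExp_injective, iterDownshift,
      card_foldl_downshift]
  have hsub' : (iterDownshift σ V).image toExp ⊆ hfin.toFinset :=
    fun m hm => (Set.Finite.mem_toFinset hfin).mpr (hDsub m hm)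
  have hcard1 : hfin.toFinset.card ≤ V.card :=
    card_le_of_subset_stdMon V lin hfin.toFinset
      (fun m hm => (Set.Finite.mem_toFinset hfin).mp hm)
  have heq : (iterDownshift σ V).image toExp = hfin.toFinset :=
    Finset.eq_of_subset_of_card_le hsub' (hcard1.trans_eq hDcard.symm)
  rw [← Set.Finite.coe_toFinset hfin, ← heq]
end

section
/- A finite set of vectors 𝒱 ⊆ {0,1,…,k−1}^n ⊆ ℝ^n is extremal if and only if there is a finite family 𝒢 ⊆ ℝ[x_1,…,x_n] of degree dominated polynomials that forms a universal Gröbner basis of the vanishing ideal I(𝒱). -/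
open MvPolynomial

noncomputable def lexLO {n : ℕ} (σ : Equiv.Perm (Fin n)) : LinearOrder (Mon n) :=
  letI : WellFoundedLT (Fin n) := inferInstance
  letI lo : LinearOrder (Lex (Fin n → ℕ)) := Pi.Lex.linearOrder
  LinearOrder.lift' (fun u : Mon n => (toLex fun j => u (σ j) : Lex (Fin n → ℕ)))
    (by
      intro u v h
      ext i
      have := congrFun (congrArg ofLex h) (σ.symm i)
      simpa using this)

theorem isLexOrder_lexLO {n : ℕ} (σ : Equiv.Perm (Fin n)) : IsLexOrder σ (lexLO σ) := by
  intro u v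
  change @Pi.Lex (Fin n) (fun _ => ℕ) (· < ·) (@fun _ => (· < ·)) (fun j => u (σ j)) (fun j => v (σ j)) ↔ _
  constructor
  · rintro ⟨j, hpre, hlt⟩
    exact ⟨j, hlt, fun i hi => hpre i hi⟩
  · rintro ⟨j, hlt, hpre⟩
    exact ⟨j, fun i hi => hpre i hi, hlt⟩

section LinHelpers
variable {α : Type*} (lin : LinearOrder α)

theorem lin_le_refl (u : α) : lin.le u u := @le_refl _ lin.toPartialOrder.toPreorder u

theorem lin_le_of_lt {u v : α} (h : lin.lt u v) : lin.le u v :=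
  @le_of_lt _ lin.toPartialOrder.toPreorder _ _ h

theorem lin_le_of_eq {u v : α} (h : u = v) : lin.le u v := h ▸ lin_le_refl lin u

theorem lin_lt_of_le_ne {u v : α} (h : lin.le u v) (h2 : u ≠ v) : lin.lt u v :=
  @lt_of_le_of_ne _ lin.toPartialOrder _ _ h h2

theorem lin_le_trans {u v w : α} (h : lin.le u v) (h' : lin.le v w) : lin.le u w :=
  @le_trans _ lin.toPartialOrder.toPreorder _ _ _ h h'

theorem lin_lt_irrefl (u : α) : ¬ lin.lt u u := @lt_irrefl _ lin.toPartialOrder.toPreorder u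

theorem lin_le_antisymm {u v : α} (h : lin.le u v) (h' : lin.le v u) : u = v :=
  @le_antisymm _ lin.toPartialOrder _ _ h h'

theorem lin_not_lt_of_le {u v : α} (h : lin.le u v) : ¬ lin.lt v u := fun hc =>
  lin_lt_irrefl lin u (@lt_of_le_of_lt _ lin.toPartialOrder.toPreorder _ _ _ h hc)

theorem lin_ne_of_lt {u v : α} (h : lin.lt u v) : u ≠ v := fun hc =>
  lin_lt_irrefl lin v (hc ▸ h)

/-- Every nonempty finite set has a `lin`-maximal element. -/
theorem lin_exists_max (t : Finset α) (ht : t.Nonempty) :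
    ∃ m ∈ t, ∀ x ∈ t, lin.le x m := by
  classical
  induction t using Finset.induction_on with
  | empty => exact absurd ht (by simp)
  | @insert a s ha ih =>
    rcases s.eq_empty_or_nonempty with rfl | hs
    · exact ⟨a, by simp, by simp [lin_le_refl lin a]⟩
    · obtain ⟨m, hm, hmax⟩ := ih hs
      rcases @le_total _ lin a m with h | h
      · exact ⟨m, Finset.mem_insert_of_mem hm, by
          intro x hx
          rcases Finset.mem_insert.1 hx with rfl | hx
          · exact h
          · exact hmax x hx⟩
      · exact ⟨a, Finset.mem_insert_self a s, by
          intro x hx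
          rcases Finset.mem_insert.1 hx with rfl | hx
          · exact lin_le_refl lin x
          · exact lin_le_trans lin (hmax x hx) h⟩

end LinHelpers

section TermOrder
variable {n : ℕ}

theorem IsLexOrder.isTermOrder {σ : Equiv.Perm (Fin n)} {lin : LinearOrder (Mon n)}
    (h : IsLexOrder σ lin) : IsTermOrder lin := by
  constructor
  · intro u
    rcases eq_or_ne u 0 with rfl | hu
    · exact lin_le_refl lin 0
    · refine lin_le_of_lt lin ((h 0 u).2 ?_)
      have hne : ∃ j : Fin n, u (σ j) ≠ 0 := by
        obtain ⟨i, hi⟩ : ∃ i, u i ≠ 0 := by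
          by_contra hc
          push_neg at hc
          exact hu (Finsupp.ext fun i => by simp [hc i])
        exact ⟨σ.symm i, by simpa using hi⟩
      classical
      set J : Finset (Fin n) := Finset.univ.filter (fun j => u (σ j) ≠ 0) with hJ
      have hJne : J.Nonempty := by
        obtain ⟨j, hj⟩ := hne
        exact ⟨j, by simp [hJ, hj]⟩
      refine ⟨J.min' hJne, ?_, ?_⟩
      · have := J.min'_mem hJne
        simp only [hJ, Finset.mem_filter] at this
        simpa using Nat.pos_of_ne_zero this.2
      · intro i hi
        have : i ∉ J := fun hiJ => absurd (J.min'_le i hiJ) (by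
          exact not_le_of_gt hi)
        simp only [hJ, Finset.mem_filter, Finset.mem_univ, true_and, not_not] at this
        simp [this]
  · intro u v w huv
    rcases eq_or_ne u v with rfl | hne
    · exact lin_le_refl lin _
    · have hlt := (h u v).1 (lin_lt_of_le_ne lin huv hne)
      obtain ⟨j, hj, hpre⟩ := hlt
      refine lin_le_of_lt lin ((h _ _).2 ⟨j, ?_, ?_⟩)
      · simp only [Finsupp.add_apply]
        omega
      · intro i hi
        simp [hpre i hi]

theorem termOrder_le_of_le {lin : LinearOrder (Mon n)} (hT : IsTermOrder lin)
    {u v : Mon n} (h : u ≤ v) : lin.le u v := by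
  obtain ⟨c, rfl⟩ := le_iff_exists_add.1 h
  have := hT.2 0 c u (hT.1 c)
  simpa [add_comm] using this

theorem termOrder_lt_of_lt {lin : LinearOrder (Mon n)} (hT : IsTermOrder lin)
    {u v : Mon n} (h : u ≤ v) (hne : u ≠ v) : lin.lt u v :=
  lin_lt_of_le_ne lin (termOrder_le_of_le hT h) hne

theorem termOrder_wf {lin : LinearOrder (Mon n)} (hT : IsTermOrder lin) :
    WellFounded lin.lt := by
  rw [RelEmbedding.wellFounded_iff_isEmpty]
  constructor
  intro f
  obtain ⟨i, j, hij, hle⟩ := (Set.isPWO_of_wellQuasiOrderedLE (Set.univ : Set (Mon n))).exists_lt (f := fun k => f k)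
    (fun k => Set.mem_univ _)
  have h1 : lin.le (f i) (f j) := termOrder_le_of_le hT hle
  have h2 : lin.lt (f j) (f i) := f.map_rel_iff.2 hij
  exact lin_not_lt_of_le lin h1 h2

end TermOrder

section Points
variable {n : ℕ} (Vs : Set (Fin n → ℝ))

/-- Evaluation vector of a monomial on the point set. -/
noncomputable def evMon (m : Mon n) : ↥Vs → ℝ :=
  fun p => ∏ i, (p : Fin n → ℝ) i ^ m i

theorem eval_pt (f : MvPolynomial (Fin n) ℝ) (p : ↥Vs) :
    eval (p : Fin n → ℝ) f = ∑ d ∈ f.support, coeff d f * evMon Vs d p :=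
  eval_eq' _ f

theorem mem_vanishIdeal_iff (f : MvPolynomial (Fin n) ℝ) :
    f ∈ vanishIdeal Vs ↔ ∀ p : ↥Vs, eval (p : Fin n → ℝ) f = 0 :=
  ⟨fun h p => h p p.2, fun h v hv => h ⟨v, hv⟩⟩

theorem not_mem_stdMon_iff (lin : LinearOrder (Mon n)) (m : Mon n) :
    m ∉ stdMon lin (vanishIdeal Vs) ↔
      ∃ f ∈ vanishIdeal Vs, f ≠ 0 ∧ IsLeadMon lin f m := by
  simp [stdMon]

/-- If `m` is not standard, its evaluation vector lies in the span of the
evaluation vectors of the `lin`-smaller monomials. -/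
theorem span_of_not_std {lin : LinearOrder (Mon n)} {m : Mon n}
    (h : m ∉ stdMon lin (vanishIdeal Vs)) :
    evMon Vs m ∈ Submodule.span ℝ (evMon Vs '' {m' | lin.lt m' m}) := by
  classical
  obtain ⟨f, hfI, hf0, hm, hlead⟩ := (not_mem_stdMon_iff Vs lin m).1 h
  set c := coeff m f with hc
  have hcne : c ≠ 0 := by
    simpa [hc] using (mem_support_iff.1 hm)
  have key : evMon Vs m = ∑ d ∈ f.support.erase m, (-(coeff d f) / c) • evMon Vs d := by
    funext p
    have h0 : (0 : ℝ) = ∑ d ∈ f.support, coeff d f * evMon Vs d p := by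
      rw [← eval_pt]
      exact ((mem_vanishIdeal_iff Vs f).1 hfI p).symm
    rw [← Finset.add_sum_erase _ _ hm] at h0
    have hsum : ∑ d ∈ f.support.erase m, coeff d f * evMon Vs d p = - (c * evMon Vs m p) := by
      linarith [h0]
    have : (∑ d ∈ f.support.erase m, (-(coeff d f) / c) • evMon Vs d) p
        = ∑ d ∈ f.support.erase m, (-(coeff d f) / c) * evMon Vs d p := by
      simp [Finset.sum_apply]
    rw [this]
    have : ∑ d ∈ f.support.erase m, (-(coeff d f) / c) * evMon Vs d p
        = (-(1:ℝ) / c) * ∑ d ∈ f.support.erase m, coeff d f * evMon Vs d p := by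
      rw [Finset.mul_sum]
      refine Finset.sum_congr rfl fun d _ => by ring
    rw [this, hsum]
    field_simp
  rw [key]
  refine Submodule.sum_mem _ fun d hd => Submodule.smul_mem _ _ (Submodule.subset_span ?_)
  refine Set.mem_image_of_mem _ ?_
  have hdne : d ≠ m := (Finset.mem_erase.1 hd).1
  exact lin_lt_of_le_ne lin (hlead d (Finset.mem_of_mem_erase hd)) hdne

end Points

section Construct
variable {n : ℕ} (Vs : Set (Fin n → ℝ))

theorem coeff_finsuppSum (l : Mon n →₀ ℝ) (u : Mon n) :
    coeff u (l.sum fun v c => (monomial v c : MvPolynomial (Fin n) ℝ)) = l u := by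
  classical
  rw [Finsupp.sum, coeff_sum]
  simp only [coeff_monomial]
  rw [Finset.sum_ite_eq' l.support u fun v => l v]
  by_cases hu : u ∈ l.support
  · simp [hu]
  · simp [hu, Finsupp.notMem_support_iff.1 hu]

/-- From a linear combination representing `evMon m` one can construct an element of the
vanishing ideal with `coeff m = 1` and all other monomials in the supporting set. -/
theorem exists_poly_of_span {A : Set (Mon n)} {m : Mon n} (hm : m ∉ A)
    (h : evMon Vs m ∈ Submodule.span ℝ (evMon Vs '' A)) :
    ∃ g : MvPolynomial (Fin n) ℝ, g ∈ vanishIdeal Vs ∧ coeff m g = 1 ∧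
      ∀ v ∈ g.support, v = m ∨ v ∈ A := by
  classical
  obtain ⟨l, hlsupp, hl⟩ := (Finsupp.mem_span_image_iff_linearCombination ℝ).1 h
  rw [Finsupp.mem_supported] at hlsupp
  refine ⟨monomial m 1 - l.sum fun v c => monomial v c, ?_, ?_, ?_⟩
  · rw [mem_vanishIdeal_iff]
    intro p
    have hl' : (l.sum fun v c => c • evMon Vs v) = evMon Vs m := by
      rw [Finsupp.linearCombination_apply] at hl
      exact hl
    have hcomb : l.sum (fun v c => c * evMon Vs v p) = evMon Vs m p := by
      have h2 := congrFun hl' p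
      simp only [Finsupp.sum, Finset.sum_apply, Pi.smul_apply, smul_eq_mul] at h2
      simpa [Finsupp.sum] using h2
    simp only [Finsupp.sum] at hcomb
    rw [map_sub]
    have hmap : eval (p : Fin n → ℝ) (l.sum fun v c => monomial v c)
        = ∑ v ∈ l.support, l v * evMon Vs v p := by
      rw [Finsupp.sum, map_sum]
      refine Finset.sum_congr rfl fun v _ => ?_
      rw [eval_monomial, Finsupp.prod_pow]
      rfl
    rw [hmap, hcomb, eval_monomial, Finsupp.prod_pow]
    show 1 * evMon Vs m p - evMon Vs m p = 0
    ring
  · have hlm : l m = 0 := Finsupp.notMem_support_iff.1 fun hc => hm (hlsupp hc)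
    rw [coeff_sub, coeff_finsuppSum, coeff_monomial, if_pos rfl, hlm, sub_zero]
  · intro v hv
    rcases eq_or_ne v m with rfl | hne
    · exact Or.inl rfl
    · right
      have := mem_support_iff.1 hv
      rw [coeff_sub, coeff_monomial, if_neg (fun hc => hne hc.symm), coeff_finsuppSum,
        zero_sub, ne_eq, neg_eq_zero] at this
      exact hlsupp (Finsupp.mem_support_iff.2 this)

end Construct

section Std
variable {n : ℕ} (Vs : Set (Fin n → ℝ))

theorem not_std_of_span {lin : LinearOrder (Mon n)} {A : Set (Mon n)} {m : Mon n}
    (hA : A ⊆ {m' | lin.lt m' m})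
    (h : evMon Vs m ∈ Submodule.span ℝ (evMon Vs '' A)) :
    m ∉ stdMon lin (vanishIdeal Vs) := by
  have hm : m ∉ A := fun hc => lin_lt_irrefl lin m (hA hc)
  obtain ⟨g, hgI, hgc, hgs⟩ := exists_poly_of_span Vs hm h
  rw [not_mem_stdMon_iff]
  have hmg : m ∈ g.support := mem_support_iff.2 (by rw [hgc]; exact one_ne_zero)
  refine ⟨g, hgI, ?_, hmg, ?_⟩
  · intro hc
    rw [hc] at hmg
    simp at hmg
  · intro v hv
    rcases hgs v hv with rfl | hvA
    · exact lin_le_refl lin v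
    · exact lin_le_of_lt lin (hA hvA)

/-- Any monomial divisible by the dominating monomial of a degree dominated element of
the vanishing ideal is non-standard for every term order. -/
theorem not_std_shift {lin : LinearOrder (Mon n)} (hT : IsTermOrder lin)
    {g : MvPolynomial (Fin n) ℝ} {m₀ : Mon n} (hgI : g ∈ vanishIdeal Vs)
    (hgc : coeff m₀ g = 1) (hgs : ∀ v ∈ g.support, v ≤ m₀) (u : Mon n) :
    (u + m₀) ∉ stdMon lin (vanishIdeal Vs) := by
  classical
  set g' : MvPolynomial (Fin n) ℝ := monomial u 1 * g with hg'
  have hrepr : g' = ∑ v ∈ g.support, monomial (u + v) (coeff v g) := by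
    conv_lhs => rw [hg', g.as_sum, Finset.mul_sum]
    refine Finset.sum_congr rfl fun v _ => ?_
    rw [monomial_mul, one_mul]
  have hcoeff : ∀ t : Mon n, coeff t g' ≠ 0 → ∃ v ∈ g.support, t = u + v := by
    intro t ht
    by_contra hc
    push_neg at hc
    apply ht
    rw [hrepr, coeff_sum]
    refine Finset.sum_eq_zero fun v hv => ?_
    rw [coeff_monomial, if_neg fun hco => hc v hv hco.symm]
  have hc' : coeff (u + m₀) g' = 1 := by
    rw [hg', coeff_monomial_mul, hgc, mul_one]
  rw [not_mem_stdMon_iff]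
  have hmem : u + m₀ ∈ g'.support := mem_support_iff.2 (by rw [hc']; exact one_ne_zero)
  refine ⟨g', Ideal.mul_mem_left _ _ hgI, ?_, hmem, ?_⟩
  · intro hc
    rw [hc] at hmem
    simp at hmem
  · intro t ht
    obtain ⟨v, hv, rfl⟩ := hcoeff t (mem_support_iff.1 ht)
    exact termOrder_le_of_le hT (add_le_add_right (hgs v hv) u)

/-- Every monomial's evaluation vector lies in the span of the evaluation vectors of
standard monomials below it. -/
theorem mem_span_std {lin : LinearOrder (Mon n)} (hT : IsTermOrder lin) (m : Mon n) :
    evMon Vs m ∈ Submodule.span ℝ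
      (evMon Vs '' {s | s ∈ stdMon lin (vanishIdeal Vs) ∧ lin.le s m}) := by
  induction m using (termOrder_wf hT).induction with
  | _ m IH =>
    by_cases hm : m ∈ stdMon lin (vanishIdeal Vs)
    · exact Submodule.subset_span (Set.mem_image_of_mem _ ⟨hm, lin_le_refl lin m⟩)
    · refine Submodule.span_le.2 ?_ (span_of_not_std Vs hm)
      rintro x ⟨m', hm', rfl⟩
      have := IH m' hm'
      refine Submodule.span_le.2 ?_ this
      rintro y ⟨s, ⟨hs1, hs2⟩, rfl⟩
      exact Submodule.subset_span
        (Set.mem_image_of_mem _ ⟨hs1, lin_le_trans lin hs2 (lin_le_of_lt lin hm')⟩)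

/-- Uniqueness of representations supported on standard monomials. -/
theorem rep_unique {lin : LinearOrder (Mon n)} {l l' : Mon n →₀ ℝ}
    (hl : ↑l.support ⊆ stdMon lin (vanishIdeal Vs))
    (hl' : ↑l'.support ⊆ stdMon lin (vanishIdeal Vs))
    (h : Finsupp.linearCombination ℝ (evMon Vs) l = Finsupp.linearCombination ℝ (evMon Vs) l') :
    l = l' := by
  classical
  by_contra hne
  set d : Mon n →₀ ℝ := l - l' with hd
  have hd0 : d ≠ 0 := fun hc => hne (sub_eq_zero.1 hc)
  have hdsupp : ↑d.support ⊆ stdMon lin (vanishIdeal Vs) := by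
    intro x hx
    have := Finsupp.support_sub (f := l) (g := l') (by exact hx)
    rcases Finset.mem_union.1 this with h1 | h1
    · exact hl h1
    · exact hl' h1
  have hcomb : Finsupp.linearCombination ℝ (evMon Vs) d = 0 := by
    rw [hd, map_sub, h, sub_self]
  obtain ⟨m, hm, hmax⟩ := lin_exists_max lin d.support (Finsupp.support_nonempty_iff.2 hd0)
  have hdm : d m ≠ 0 := Finsupp.mem_support_iff.1 hm
  have hspan : evMon Vs m ∈ Submodule.span ℝ (evMon Vs '' {m' | lin.lt m' m}) := by
    have h0 : (0 : ↥Vs → ℝ) = ∑ p ∈ d.support, d p • evMon Vs p := by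
      rw [← hcomb, Finsupp.linearCombination_apply, Finsupp.sum]
    rw [← Finset.add_sum_erase _ _ hm] at h0
    have key : evMon Vs m = ∑ p ∈ d.support.erase m, (-(d p) / d m) • evMon Vs p := by
      funext q
      have h0q := congrFun h0 q
      simp only [Finset.sum_apply, Pi.add_apply, Pi.smul_apply, Pi.zero_apply,
        smul_eq_mul] at h0q
      simp only [Finset.sum_apply, Pi.smul_apply, smul_eq_mul]
      have : ∑ p ∈ d.support.erase m, (-(d p) / d m) * evMon Vs p q
          = (-(1:ℝ) / d m) * ∑ p ∈ d.support.erase m, d p * evMon Vs p q := by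
        rw [Finset.mul_sum]
        exact Finset.sum_congr rfl fun p _ => by ring
      rw [this]
      have hsum : ∑ p ∈ d.support.erase m, d p * evMon Vs p q = - (d m * evMon Vs m q) := by
        linarith [h0q]
      rw [hsum]
      field_simp
    rw [key]
    refine Submodule.sum_mem _ fun p hp => Submodule.smul_mem _ _ (Submodule.subset_span ?_)
    refine Set.mem_image_of_mem _ ?_
    exact lin_lt_of_le_ne lin (hmax p (Finset.mem_of_mem_erase hp)) (Finset.mem_erase.1 hp).1
  exact not_std_of_span Vs (fun x hx => hx) hspan (hdsupp hm)

end Std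

section Forward
variable {n : ℕ}

theorem forward_direction (Vs : Set (Fin n → ℝ)) (hext : IsExtremal Vs) :
    ∃ G : Finset (MvPolynomial (Fin n) ℝ),
      (∀ g ∈ G, IsDegDominated g) ∧ IsUnivGroebner G (vanishIdeal Vs) := by
  classical
  set lin₀ : LinearOrder (Mon n) := lexLO 1 with hlin₀
  have hlex₀ : IsLexOrder 1 lin₀ := isLexOrder_lexLO 1
  set S : Set (Mon n) := stdMon lin₀ (vanishIdeal Vs) with hS
  have hcommon : ∀ σ : Equiv.Perm (Fin n), stdMon (lexLO σ) (vanishIdeal Vs) = S :=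
    fun σ => hext σ 1 (lexLO σ) lin₀ (isLexOrder_lexLO σ) hlex₀
  -- Key: every non-standard monomial is spanned by smaller *dividing* standard monomials
  have keyC : ∀ m ∉ S, evMon Vs m ∈ Submodule.span ℝ
      (evMon Vs '' {s | s ∈ S ∧ s ≤ m ∧ s ≠ m}) := by
    intro m hm
    have hrep : ∀ σ : Equiv.Perm (Fin n), ∃ l : Mon n →₀ ℝ,
        ↑l.support ⊆ {s | s ∈ S ∧ (lexLO σ).lt s m} ∧
          Finsupp.linearCombination ℝ (evMon Vs) l = evMon Vs m := by
      intro σ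
      have h1 := mem_span_std Vs (isLexOrder_lexLO σ).isTermOrder m
      rw [hcommon σ] at h1
      have h2 : {s | s ∈ S ∧ (lexLO σ).le s m} ⊆ {s | s ∈ S ∧ (lexLO σ).lt s m} :=
        fun s hs => ⟨hs.1, lin_lt_of_le_ne (lexLO σ) hs.2 (fun (hc : s = m) => hm (hc ▸ hs.1))⟩
      have h3 := Submodule.span_mono (Set.image_mono (f := evMon Vs) h2) h1
      obtain ⟨l, hls, hlc⟩ := (Finsupp.mem_span_image_iff_linearCombination ℝ).1 h3
      exact ⟨l, Finsupp.mem_supported ℝ l |>.1 hls, hlc⟩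
    choose lrep hsupp hcomb using hrep
    have huniq : ∀ σ, lrep σ = lrep 1 := by
      intro σ
      refine rep_unique Vs (lin := lin₀) ?_ ?_ (by rw [hcomb, hcomb])
      · exact fun x hx => (hsupp σ hx).1
      · exact fun x hx => (hsupp 1 hx).1
    have hfinal : ↑(lrep 1).support ⊆ {s | s ∈ S ∧ s ≤ m ∧ s ≠ m} := by
      intro p hp
      have hpS : p ∈ S := (hsupp 1 hp).1
      have hlt : ∀ σ : Equiv.Perm (Fin n), lexLt σ p m := by
        intro σ
        have hp' : p ∈ (lrep σ).support := by rw [huniq σ]; exact hp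
        exact (isLexOrder_lexLO σ p m).1 (hsupp σ hp').2
      refine ⟨hpS, ?_, ?_⟩
      · by_contra hc
        rw [Finsupp.le_def] at hc
        push_neg at hc
        obtain ⟨i, hi⟩ := hc
        have hi' : m i < p i := by omega
        have hpos : 0 < n := i.pos
        set z : Fin n := ⟨0, hpos⟩ with hz
        obtain ⟨j, hj, hpre⟩ := hlt (Equiv.swap z i)
        rcases eq_or_ne j z with rfl | hjz
        · rw [Equiv.swap_apply_left] at hj
          omega
        · have hzj : z < j := by
            have : j.1 ≠ 0 := fun hc0 => hjz (Fin.ext hc0)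
            exact Fin.lt_def.2 (by simp [hz]; omega)
          have := hpre z hzj
          rw [Equiv.swap_apply_left] at this
          omega
      · intro hc
        subst hc
        obtain ⟨j, hj, -⟩ := hlt 1
        exact lt_irrefl _ hj
    refine (Finsupp.mem_span_image_iff_linearCombination ℝ).2
      ⟨lrep 1, (Finsupp.mem_supported ℝ _).2 hfinal, hcomb 1⟩
  -- minimal non-standard monomials
  set M : Set (Mon n) := {m | m ∉ S ∧ ∀ v, v ≤ m → v ≠ m → v ∈ S} with hM
  have hMmin : ∀ m ∉ S, ∃ m₀ ∈ M, m₀ ≤ m := by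
    intro m hm
    have key : ∀ N : ℕ, ∀ m : Mon n, (∑ i, m i) = N → m ∉ S → ∃ m₀ ∈ M, m₀ ≤ m := by
      intro N
      induction N using Nat.strong_induction_on with
      | _ N IH =>
        intro m hdeg hm
        by_cases hall : ∀ v, v ≤ m → v ≠ m → v ∈ S
        · exact ⟨m, ⟨hm, hall⟩, le_refl m⟩
        · push_neg at hall
          obtain ⟨v, hvm, hvne, hvS⟩ := hall
          have hlt : (∑ i, v i) < N := by
            rw [← hdeg]
            refine Finset.sum_lt_sum (fun i _ => Finsupp.le_def.1 hvm i) ?_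
            by_contra hc
            push_neg at hc
            exact hvne (Finsupp.ext fun i =>
              le_antisymm (Finsupp.le_def.1 hvm i) (hc i (Finset.mem_univ i)))
          obtain ⟨m₀, hm₀, hle⟩ := IH _ hlt v rfl hvS
          exact ⟨m₀, hm₀, le_trans hle hvm⟩
    exact key _ m rfl hm
  have hMfin : M.Finite := by
    by_contra hinf
    have hinf' : M.Infinite := hinf
    set f := hinf'.natEmbedding with hf
    obtain ⟨i, j, hij, hle⟩ := (Set.isPWO_of_wellQuasiOrderedLE M).exists_lt (f := fun k => (f k : Mon n)) (fun k => (f k).2)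
    rcases eq_or_ne ((f i : Mon n)) ((f j : Mon n)) with heq | hne
    · exact absurd (f.injective (Subtype.ext heq)) (Nat.ne_of_lt hij)
    · exact absurd ((f j).2.2 (f i) hle hne) (f i).2.1
  -- degree dominated generators
  have hg : ∀ m ∈ M, ∃ g : MvPolynomial (Fin n) ℝ,
      g ∈ vanishIdeal Vs ∧ coeff m g = 1 ∧ ∀ v ∈ g.support, v ≤ m := by
    intro m hmM
    have hmS : m ∉ S := hmM.1
    have hmA : m ∉ {s | s ∈ S ∧ s ≤ m ∧ s ≠ m} := fun hc => hc.2.2 rfl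
    obtain ⟨g, hgI, hgc, hgs⟩ := exists_poly_of_span Vs hmA (keyC m hmS)
    refine ⟨g, hgI, hgc, fun v hv => ?_⟩
    rcases hgs v hv with rfl | hvA
    · exact le_refl v
    · exact hvA.2.1
  choose! gfun hg1 hg2 hg3 using hg
  refine ⟨hMfin.toFinset.image gfun, ?_, ?_⟩
  · intro g hgG
    obtain ⟨m, hmfin, rfl⟩ := Finset.mem_image.1 hgG
    have hmM : m ∈ M := hMfin.mem_toFinset.1 hmfin
    exact ⟨m, hg2 m hmM, hg3 m hmM⟩
  · intro lin hT
    have hsub : stdMon lin (vanishIdeal Vs) ⊆ S := by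
      intro t ht
      by_contra htS
      obtain ⟨m₀, hm₀M, hle⟩ := hMmin t htS
      obtain ⟨c, rfl⟩ := le_iff_exists_add.1 hle
      refine not_std_shift Vs hT (hg1 m₀ hm₀M) (hg2 m₀ hm₀M) (hg3 m₀ hm₀M) c ?_
      rwa [add_comm]
    have hsup : S ⊆ stdMon lin (vanishIdeal Vs) := by
      intro s hs
      by_contra hsn
      have h1 := mem_span_std Vs hT s
      obtain ⟨l, hls, hlc⟩ := (Finsupp.mem_span_image_iff_linearCombination ℝ).1 h1
      rw [Finsupp.mem_supported] at hls
      have hlS : ↑l.support ⊆ S := fun x hx => hsub (hls hx).1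
      have hsingle : Finsupp.linearCombination ℝ (evMon Vs) (Finsupp.single s 1) =
          evMon Vs s := by
        rw [Finsupp.linearCombination_single, one_smul]
      have huniq : Finsupp.single s (1:ℝ) = l := by
        refine rep_unique Vs (lin := lin₀) ?_ hlS (by rw [hsingle, hlc])
        intro x hx
        have : x = s := by
          have := Finsupp.mem_support_iff.1 hx
          by_contra hc
          exact this (Finsupp.single_eq_of_ne' (fun h => hc h.symm))
        subst this
        exact hs
      have : l s = 0 := by
        have hsA : s ∉ l.support := fun hc => hsn (hls hc).1
        exact Finsupp.notMem_support_iff.1 hsA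
      rw [← huniq, Finsupp.single_eq_same] at this
      exact one_ne_zero this
    constructor
    · intro g hgG
      obtain ⟨m, hmfin, rfl⟩ := Finset.mem_image.1 hgG
      exact hg1 m (hMfin.mem_toFinset.1 hmfin)
    · intro f hfI hf0 m hlead
      have hmn : m ∉ stdMon lin (vanishIdeal Vs) :=
        (not_mem_stdMon_iff Vs lin m).2 ⟨f, hfI, hf0, hlead⟩
      have hmS : m ∉ S := fun hc => hmn (hsup hc)
      obtain ⟨m₀, hm₀M, hle⟩ := hMmin m hmS
      refine ⟨gfun m₀, Finset.mem_image.2 ⟨m₀, hMfin.mem_toFinset.2 hm₀M, rfl⟩, m₀, ?_, hle⟩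
      refine ⟨mem_support_iff.2 (by rw [hg2 m₀ hm₀M]; exact one_ne_zero), ?_⟩
      exact fun v hv => termOrder_le_of_le hT (hg3 m₀ hm₀M v hv)

end Forward

section Converse
variable {n : ℕ}

open Classical in
/-- A choice of dominating monomial for a degree dominated polynomial. -/
noncomputable def wdom (g : MvPolynomial (Fin n) ℝ) : Mon n :=
  if h : IsDegDominated g then h.choose else 0

theorem wdom_spec {g : MvPolynomial (Fin n) ℝ} (h : IsDegDominated g) :
    coeff (wdom g) g = 1 ∧ ∀ v ∈ g.support, v ≤ wdom g := by
  rw [wdom, dif_pos h]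
  exact h.choose_spec

theorem stdMon_eq_of_groebner (Vs : Set (Fin n → ℝ)) {G : Finset (MvPolynomial (Fin n) ℝ)}
    (hdd : ∀ g ∈ G, IsDegDominated g) (hGI : ∀ g ∈ G, g ∈ vanishIdeal Vs)
    {lin : LinearOrder (Mon n)} (hT : IsTermOrder lin)
    (hGB : IsGroebner lin G (vanishIdeal Vs)) :
    stdMon lin (vanishIdeal Vs) = {m : Mon n | ∀ g ∈ G, ¬ wdom g ≤ m} := by
  ext m
  constructor
  · intro hm
    intro g hgG hle
    obtain ⟨c, rfl⟩ := le_iff_exists_add.1 hle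
    obtain ⟨hc1, hc2⟩ := wdom_spec (hdd g hgG)
    refine not_std_shift Vs hT (hGI g hgG) hc1 hc2 c ?_
    rwa [add_comm]
  · intro hm
    by_contra hmn
    obtain ⟨f, hfI, hf0, hm', hlead⟩ := (not_mem_stdMon_iff Vs lin m).1 hmn
    obtain ⟨g, hgG, mg, hleadg, hle⟩ := hGB.2 f hfI hf0 m ⟨hm', hlead⟩
    obtain ⟨hc1, hc2⟩ := wdom_spec (hdd g hgG)
    have h1 : lin.le mg (wdom g) := termOrder_le_of_le hT (hc2 mg hleadg.1)
    have h2 : lin.le (wdom g) mg :=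
      hleadg.2 _ (mem_support_iff.2 (by rw [hc1]; exact one_ne_zero))
    have : mg = wdom g := lin_le_antisymm lin h1 h2
    exact hm g hgG (this ▸ hle)

theorem converse_direction (Vs : Set (Fin n → ℝ)) {G : Finset (MvPolynomial (Fin n) ℝ)}
    (hdd : ∀ g ∈ G, IsDegDominated g) (hU : IsUnivGroebner G (vanishIdeal Vs)) :
    IsExtremal Vs := by
  intro σ₁ σ₂ lin₁ lin₂ h₁ h₂
  have hT₁ := h₁.isTermOrder
  have hT₂ := h₂.isTermOrder
  have hGI : ∀ g ∈ G, g ∈ vanishIdeal Vs := (hU lin₁ hT₁).1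
  rw [stdMon_eq_of_groebner Vs hdd hGI hT₁ (hU lin₁ hT₁),
    stdMon_eq_of_groebner Vs hdd hGI hT₂ (hU lin₂ hT₂)]

end Converse
/-- Theorem `genextrGrobner`.
A finite set of vectors `𝒱 ⊆ {0,…,k-1}^n ⊆ ℝ^n` is extremal if and only if there is a
finite family of degree dominated polynomials forming a universal Gröbner basis of
`I(𝒱)`. -/
theorem extremal_iff_degDominated_universal_groebner {n k : ℕ}
    (V : Finset (Fin n → Fin k)) :
    IsExtremal ((V.image (toField ℝ) : Finset (Fin n → ℝ)) : Set (Fin n → ℝ)) ↔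
      ∃ G : Finset (MvPolynomial (Fin n) ℝ),
        (∀ g ∈ G, IsDegDominated g) ∧
          IsUnivGroebner G
            (vanishIdeal ((V.image (toField ℝ) : Finset (Fin n → ℝ)) :
              Set (Fin n → ℝ))) := by
  constructor
  · exact fun hext => forward_direction _ hext
  · rintro ⟨G, hdd, hU⟩
    exact converse_direction _ hdd hU
end
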